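/- arXiv:2007.15833 — 5 statements merged into one kernel-verified Lean document; each statement's English description precedes it below -/
import Mathlib

section
/- Let B : ℝ → (n×n real matrices) be continuous and let y : ℝ → ℝⁿ be differentiable with y′(t) = B(t) y(t) for all t in [s, T]. Then for every t ∈ [s, T], ‖y(t)‖₁ ≤ exp( ∫_s^t γ(B(u)) du ) · ‖y(s)‖₁, where γ(M) = max_{1≤j≤n} ( M_{jj} + Σ_{i≠j} |M_{ij}| ). -/
open Filter Topology Finset Matrix

/-- The `ℓ¹` logarithmic norm of a matrix: `γ(M) = max_j (M j j + ∑_{i ≠ j} |M i j|)`. -/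
noncomputable def logNormL1 {n : ℕ} (M : Matrix (Fin (n + 1)) (Fin (n + 1)) ℝ) : ℝ :=
  Finset.univ.sup' Finset.univ_nonempty fun j => M j j + ∑ i ∈ Finset.univ.erase j, |M i j|

lemma l1_step {n : ℕ} (M : Matrix (Fin (n + 1)) (Fin (n + 1)) ℝ) (x : Fin (n + 1) → ℝ)
    (h : ℝ) (h0 : 0 ≤ h) (hsm : ∀ j, 0 ≤ 1 + h * M j j) :
    ∑ i, |x i + h * (M *ᵥ x) i| ≤ (1 + h * logNormL1 M) * ∑ i, |x i| := by
  have key : ∀ i, x i + h * (M *ᵥ x) i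
      = ∑ j, ((if i = j then (1 : ℝ) else 0) + h * M i j) * x j := by
    intro i
    simp [Matrix.mulVec, dotProduct, Finset.mul_sum, add_mul,
      Finset.sum_add_distrib, Finset.sum_ite_eq, mul_assoc]
  calc ∑ i, |x i + h * (M *ᵥ x) i|
      ≤ ∑ i, ∑ j, |(if i = j then (1 : ℝ) else 0) + h * M i j| * |x j| := by
        refine Finset.sum_le_sum fun i _ => ?_
        rw [key i]
        refine (Finset.abs_sum_le_sum_abs _ _).trans ?_
        refine Finset.sum_le_sum fun j _ => ?_
        rw [abs_mul]
    _ = ∑ j, (∑ i, |(if i = j then (1 : ℝ) else 0) + h * M i j|) * |x j| := by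
        rw [Finset.sum_comm]
        simp [Finset.sum_mul]
    _ ≤ ∑ j, (1 + h * logNormL1 M) * |x j| := by
        refine Finset.sum_le_sum fun j _ => ?_
        refine mul_le_mul_of_nonneg_right ?_ (abs_nonneg _)
        have hsplit : ∑ i, |(if i = j then (1 : ℝ) else 0) + h * M i j|
            = |1 + h * M j j| + ∑ i ∈ Finset.univ.erase j, |h * M i j| := by
          rw [← Finset.add_sum_erase _ _ (Finset.mem_univ j)]
          congr 1
          · simp
          · refine Finset.sum_congr rfl fun i hi => ?_
            rw [if_neg (Finset.ne_of_mem_erase hi), zero_add]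
        rw [hsplit, abs_of_nonneg (hsm j)]
        have habs : ∑ i ∈ Finset.univ.erase j, |h * M i j|
            = h * ∑ i ∈ Finset.univ.erase j, |M i j| := by
          rw [Finset.mul_sum]
          exact Finset.sum_congr rfl fun i _ => by rw [abs_mul, abs_of_nonneg h0]
        rw [habs]
        have hγ : M j j + ∑ i ∈ Finset.univ.erase j, |M i j| ≤ logNormL1 M := by
          unfold logNormL1
          exact Finset.le_sup' (fun j => M j j + ∑ i ∈ Finset.univ.erase j, |M i j|)
            (Finset.mem_univ j)
        nlinarith [mul_le_mul_of_nonneg_left hγ h0]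
    _ = (1 + h * logNormL1 M) * ∑ i, |x i| := by rw [← Finset.mul_sum]

lemma slope_bound {n : ℕ} {y : ℝ → Fin (n + 1) → ℝ} {M : Matrix (Fin (n + 1)) (Fin (n + 1)) ℝ}
    {t : ℝ} (hy : HasDerivAt y (M *ᵥ y t) t) {r : ℝ}
    (hr : logNormL1 M * (∑ i, |y t i|) < r) :
    ∀ᶠ z in 𝓝[>] t, slope (fun u => ∑ i, |y u i|) t z < r := by
  set d := M *ᵥ y t with hd
  set g := logNormL1 M with hg
  set ft := ∑ i, |y t i| with hft
  set ε := (r - g * ft) / (2 * (n + 1)) with hεdef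
  have hε : 0 < ε := by
    apply div_pos (by linarith) (by positivity)
  have hlittle : ∀ᶠ z in 𝓝 t, ‖y z - y t - (z - t) • d‖ ≤ ε * ‖z - t‖ := by
    have := (hasDerivAt_iff_isLittleO.mp hy)
    exact this.def hε
  have h1 : ∀ᶠ z in 𝓝 t, ∀ j, 0 ≤ 1 + (z - t) * M j j := by
    refine Filter.eventually_all.mpr fun j => ?_
    have hc : Tendsto (fun z => 1 + (z - t) * M j j) (𝓝 t) (𝓝 1) := by
      have : ContinuousAt (fun z => 1 + (z - t) * M j j) t := by fun_prop
      simpa using this.tendsto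
    exact (hc.eventually (eventually_gt_nhds one_pos)).mono fun z hz => le_of_lt hz
  filter_upwards [h1.filter_mono nhdsWithin_le_nhds, hlittle.filter_mono nhdsWithin_le_nhds,
    self_mem_nhdsWithin] with z hz1 hz2 hz3
  have hzt : 0 < z - t := sub_pos.mpr hz3
  have hcoord : ∀ i, |y z i - (y t i + (z - t) * d i)| ≤ ε * (z - t) := by
    intro i
    have h1 := norm_le_pi_norm (y z - y t - (z - t) • d) i
    have h2 : (y z - y t - (z - t) • d) i = y z i - (y t i + (z - t) * d i) := by
      simp [Pi.sub_apply, Pi.smul_apply, smul_eq_mul]; ring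
    rw [h2] at h1
    calc |y z i - (y t i + (z - t) * d i)| ≤ ‖y z - y t - (z - t) • d‖ := h1
      _ ≤ ε * ‖z - t‖ := hz2
      _ = ε * (z - t) := by rw [Real.norm_eq_abs, abs_of_pos hzt]
  have hstep : ∑ i, |y t i + (z - t) * d i| ≤ (1 + (z - t) * g) * ft :=
    l1_step M (y t) (z - t) hzt.le hz1
  have hsum : ∑ i, |y z i| ≤ (1 + (z - t) * g) * ft + (n + 1) * (ε * (z - t)) := by
    have h3 : ∑ i, |y z i|
        ≤ ∑ i, (|y t i + (z - t) * d i| + |y z i - (y t i + (z - t) * d i)|) := by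
      refine Finset.sum_le_sum fun i _ => ?_
      have := abs_sub_abs_le_abs_sub (y z i) (y t i + (z - t) * d i)
      linarith [abs_nonneg (y z i - (y t i + (z - t) * d i))]
    rw [Finset.sum_add_distrib] at h3
    have h4 : ∑ i, |y z i - (y t i + (z - t) * d i)| ≤ (n + 1) * (ε * (z - t)) := by
      calc ∑ i : Fin (n + 1), |y z i - (y t i + (z - t) * d i)|
          ≤ ∑ _i : Fin (n + 1), ε * (z - t) := Finset.sum_le_sum fun i _ => hcoord i
        _ = (n + 1) * (ε * (z - t)) := by
            simp [Finset.sum_const, nsmul_eq_mul]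
    linarith
  rw [slope_def_field, div_lt_iff₀ hzt]
  have hne : (n + 1 : ℝ) * ε = (r - g * ft) / 2 := by
    rw [hεdef]; field_simp
  have hfinal : g * ft + (n + 1 : ℝ) * ε < r := by rw [hne]; linarith
  nlinarith [hsum]

lemma gamma_cont {n : ℕ} {B : ℝ → Matrix (Fin (n + 1)) (Fin (n + 1)) ℝ} (hB : Continuous B) :
    Continuous fun u => logNormL1 (B u) := by
  have hent : ∀ i k, Continuous fun u => B u i k := fun i k =>
    (continuous_apply k).comp ((continuous_apply i).comp hB)
  exact Continuous.finset_sup'_apply Finset.univ_nonempty fun j _ =>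
    (hent j j).add (continuous_finset_sum _ fun i _ => (hent i j).abs)

/-- If `B : ℝ → Matrix` is continuous and `y` solves `y' = B(t) y` on `[s, T]`, then
`‖y(t)‖₁ ≤ exp(∫_s^t γ(B(u)) du) ‖y(s)‖₁` for every `t ∈ [s, T]`. -/
theorem stmt2 {n : ℕ} (B : ℝ → Matrix (Fin (n + 1)) (Fin (n + 1)) ℝ)
    (hB : Continuous B) (s T : ℝ) (y : ℝ → Fin (n + 1) → ℝ)
    (hy : ∀ t ∈ Set.Icc s T, HasDerivAt y (B t *ᵥ y t) t) :
    ∀ t ∈ Set.Icc s T,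
      ∑ i, |y t i| ≤ Real.exp (∫ u in s..t, logNormL1 (B u)) * ∑ i, |y s i| := by
  intro t ht
  set f : ℝ → ℝ := fun u => ∑ i, |y u i| with hfdef
  set g : ℝ → ℝ := fun u => logNormL1 (B u) with hgdef
  have hgc : Continuous g := gamma_cont hB
  have hout : Continuous fun v : Fin (n + 1) → ℝ => ∑ i, |v i| :=
    continuous_finset_sum _ fun i _ => (continuous_apply i).abs
  have hfc : ContinuousOn f (Set.Icc s T) := fun u hu =>
    (hout.continuousAt.comp (hy u hu).continuousAt).continuousWithinAt
  have hfs : 0 ≤ f s := Finset.sum_nonneg fun i _ => abs_nonneg _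
  have key : ∀ ε > 0, f t ≤ (f s + ε) * Real.exp ((∫ u in s..t, g u) + (t - s) * ε) := by
    intro ε hε
    set Bd : ℝ → ℝ := fun x => (f s + ε) * Real.exp (∫ u in s..x, (g u + ε)) with hBddef
    have hgε : Continuous fun u => g u + ε := hgc.add continuous_const
    have hBd : ∀ x, HasDerivAt Bd (Bd x * (g x + ε)) x := by
      intro x
      have hI : HasDerivAt (fun x => ∫ u in s..x, (g u + ε)) (g x + ε) x :=
        intervalIntegral.integral_hasDerivAt_right (hgε.intervalIntegrable _ _)
          (hgε.stronglyMeasurableAtFilter _ _) hgε.continuousAt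
      have := (hI.exp).const_mul (f s + ε)
      exact this.congr_deriv (by simp only [hBddef]; ring)
    have hres := image_le_of_liminf_slope_right_lt_deriv_boundary
      (f := f) (f' := fun x => g x * f x) (a := s) (b := T) hfc
      (fun x hx r hr =>
        (slope_bound (hy x (Set.mem_Ico.mp hx |> fun h => ⟨h.1, h.2.le⟩)) hr).frequently)
      (by
        simp only [hBddef, intervalIntegral.integral_same, Real.exp_zero, mul_one]
        linarith)
      hBd
      (fun x hx hfx => by
        have hBdpos : 0 < Bd x := by
          apply mul_pos (by linarith) (Real.exp_pos _)
        show g x * f x < Bd x * (g x + ε)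
        rw [hfx]
        nlinarith)
      ht
    have hint : (∫ u in s..t, (g u + ε)) = (∫ u in s..t, g u) + (t - s) * ε := by
      rw [intervalIntegral.integral_add (hgc.intervalIntegrable _ _)
        (intervalIntegrable_const), intervalIntegral.integral_const, smul_eq_mul]
    rw [hBddef] at hres
    simpa [hint] using hres
  have hlim : Tendsto (fun ε : ℝ => (f s + ε) * Real.exp ((∫ u in s..t, g u) + (t - s) * ε))
      (𝓝[>] 0) (𝓝 (Real.exp (∫ u in s..t, g u) * f s)) := by
    have hc : ContinuousAt
        (fun ε : ℝ => (f s + ε) * Real.exp ((∫ u in s..t, g u) + (t - s) * ε)) 0 := by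
      fun_prop
    have h0 : Tendsto (fun ε : ℝ => (f s + ε) * Real.exp ((∫ u in s..t, g u) + (t - s) * ε))
        (𝓝[>] (0 : ℝ)) (𝓝 ((f s + 0) * Real.exp ((∫ u in s..t, g u) + (t - s) * 0))) :=
      hc.tendsto.mono_left nhdsWithin_le_nhds
    simpa [mul_comm] using h0
  refine ge_of_tendsto hlim ?_
  filter_upwards [self_mem_nhdsWithin] with ε hε using key ε hε
end

section
/- Let M : ℝ → (n×n real matrices) be continuous with M_{ij}(t) ≥ 0 for all i ≠ j and all t, and let α : ℝ → ℝ be continuous with Σ_{1≤i≤n} M_{ij}(t) ≤ −α(t) for every column j and every t. If w : ℝ → ℝⁿ is differentiable with w′(t) = M(t) w(t) for all t ∈ [s, T], then for every t ∈ [s, T], ‖w(t)‖₁ ≤ exp( −∫_s^t α(u) du ) · ‖w(s)‖₁. -/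
open Filter Topology Finset Matrix

/-- If `M : ℝ → Matrix` is continuous, essentially nonnegative (off-diagonal entries
nonnegative), with every column sum of `M(t)` bounded above by `−α(t)` for a continuous
`α`, and `w` solves `w' = M(t) w` on `[s, T]`, then
`‖w(t)‖₁ ≤ exp(−∫_s^t α(u) du) ‖w(s)‖₁` for every `t ∈ [s, T]`. -/
theorem stmt3 {n : ℕ} (M : ℝ → Matrix (Fin (n + 1)) (Fin (n + 1)) ℝ)
    (hM : Continuous M) (hoff : ∀ t, ∀ i j, i ≠ j → 0 ≤ M t i j)
    (α : ℝ → ℝ) (hα : Continuous α)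
    (hcol : ∀ t, ∀ j, ∑ i, M t i j ≤ -α t)
    (s T : ℝ) (w : ℝ → Fin (n + 1) → ℝ)
    (hw : ∀ t ∈ Set.Icc s T, HasDerivAt w (M t *ᵥ w t) t) :
    ∀ t ∈ Set.Icc s T,
      ∑ i, |w t i| ≤ Real.exp (-∫ u in s..t, α u) * ∑ i, |w s i| := by
  -- the primitive of α
  set β : ℝ → ℝ := fun t => ∫ u in s..t, α u with hβdef
  have hβ : ∀ x : ℝ, HasDerivAt β (α x) x := fun x =>
    (hα.integral_hasStrictDerivAt s x).hasDerivAt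
  -- sign vectors
  set sg : (Fin (n + 1) → Bool) → Fin (n + 1) → ℝ :=
    fun σ i => if σ i then 1 else -1 with hsgdef
  have hsg_abs : ∀ σ i, |sg σ i| = 1 := by
    intro σ i
    simp only [hsgdef]
    split <;> norm_num
  -- the comparison function
  set F : ℝ → ℝ := fun t => ∑ i, |w t i| with hFdef
  set g : ℝ → ℝ := fun t => Real.exp (β t) * F t with hgdef
  set gσ : (Fin (n + 1) → Bool) → ℝ → ℝ :=
    fun σ t => Real.exp (β t) * ∑ i, sg σ i * w t i with hgσdef
  have hsum_le : ∀ σ t, ∑ i, sg σ i * w t i ≤ F t := by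
    intro σ t
    apply Finset.sum_le_sum
    intro i _
    calc sg σ i * w t i ≤ |sg σ i * w t i| := le_abs_self _
      _ = |w t i| := by rw [abs_mul, hsg_abs, one_mul]
  have hgσ_le : ∀ σ t, gσ σ t ≤ g t := fun σ t =>
    mul_le_mul_of_nonneg_left (hsum_le σ t) (Real.exp_pos _).le
  -- the max is attained
  have hattain : ∀ t, ∃ σ, gσ σ t = g t := by
    intro t
    refine ⟨fun i => decide (0 ≤ w t i), ?_⟩
    simp only [hgσdef, hgdef, hFdef]
    congr 1
    apply Finset.sum_congr rfl
    intro i _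
    by_cases h : 0 ≤ w t i
    · simp [hsgdef, h, abs_of_nonneg h]
    · push_neg at h
      simp [hsgdef, not_le.2 h, abs_of_neg h]
  -- derivative of gσ
  have hgσderiv : ∀ σ, ∀ x ∈ Set.Icc s T, HasDerivAt (gσ σ)
      (Real.exp (β x) * (α x * (∑ i, sg σ i * w x i) + ∑ i, sg σ i * (M x *ᵥ w x) i)) x := by
    intro σ x hx
    have hcomp : ∀ i : Fin (n + 1), HasDerivAt (fun t => w t i) ((M x *ᵥ w x) i) x := by
      intro i
      exact (ContinuousLinearMap.proj (R := ℝ) (φ := fun _ : Fin (n + 1) => ℝ)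
        i).hasFDerivAt.comp_hasDerivAt x (hw x hx)
    have hS : HasDerivAt (fun t => ∑ i, sg σ i * w t i)
        (∑ i, sg σ i * (M x *ᵥ w x) i) x :=
      HasDerivAt.fun_sum fun i _ => (hcomp i).const_mul (sg σ i)
    have hE : HasDerivAt (fun t => Real.exp (β t)) (Real.exp (β x) * α x) x := (hβ x).exp
    have : HasDerivAt (gσ σ) (Real.exp (β x) * α x * (∑ i, sg σ i * w x i)
        + Real.exp (β x) * ∑ i, sg σ i * (M x *ᵥ w x) i) x := hE.fun_mul hS
    convert this using 1
    ring
  -- key estimate for active sign vectors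
  have hkey : ∀ x, ∀ σ, (∑ i, sg σ i * w x i = F x) →
      ∑ i, sg σ i * (M x *ᵥ w x) i ≤ -α x * F x := by
    intro x σ hact
    -- each term attains the abs
    have hterm : ∀ i, sg σ i * w x i = |w x i| := by
      by_contra hcon
      push_neg at hcon
      obtain ⟨i0, hi0⟩ := hcon
      have hlt : sg σ i0 * w x i0 < |w x i0| := by
        rcases lt_or_eq_of_le (by
          calc sg σ i0 * w x i0 ≤ |sg σ i0 * w x i0| := le_abs_self _
            _ = |w x i0| := by rw [abs_mul, hsg_abs, one_mul]) with h | h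
        · exact h
        · exact absurd h hi0
      have : ∑ i, sg σ i * w x i < F x := by
        apply Finset.sum_lt_sum (fun i _ => ?_) ⟨i0, Finset.mem_univ i0, hlt⟩
        calc sg σ i * w x i ≤ |sg σ i * w x i| := le_abs_self _
          _ = |w x i| := by rw [abs_mul, hsg_abs, one_mul]
      exact absurd hact this.ne
    have hswap : ∑ i, sg σ i * (M x *ᵥ w x) i
        = ∑ j, ∑ i, sg σ i * (M x i j * w x j) := by
      simp only [Matrix.mulVec, dotProduct, Finset.mul_sum]
      exact Finset.sum_comm
    rw [hswap]
    have hcolj : ∀ j, ∑ i, sg σ i * (M x i j * w x j) ≤ -α x * |w x j| := by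
      intro j
      have h1 : ∑ i, sg σ i * (M x i j * w x j) ≤ ∑ i, M x i j * |w x j| := by
        apply Finset.sum_le_sum
        intro i _
        by_cases hij : i = j
        · subst hij
          have : sg σ i * (M x i i * w x i) = M x i i * (sg σ i * w x i) := by ring
          rw [this, hterm i]
        · have hM0 : 0 ≤ M x i j := hoff x i j hij
          have : sg σ i * (M x i j * w x j) = M x i j * (sg σ i * w x j) := by ring
          rw [this]
          apply mul_le_mul_of_nonneg_left _ hM0
          calc sg σ i * w x j ≤ |sg σ i * w x j| := le_abs_self _
            _ = |w x j| := by rw [abs_mul, hsg_abs, one_mul]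
      calc ∑ i, sg σ i * (M x i j * w x j) ≤ ∑ i, M x i j * |w x j| := h1
        _ = (∑ i, M x i j) * |w x j| := by rw [Finset.sum_mul]
        _ ≤ -α x * |w x j| := mul_le_mul_of_nonneg_right (hcol x j) (abs_nonneg _)
    calc ∑ j, ∑ i, sg σ i * (M x i j * w x j) ≤ ∑ j, -α x * |w x j| :=
          Finset.sum_le_sum fun j _ => hcolj j
      _ = -α x * F x := by rw [← Finset.mul_sum]
  -- continuity of g on Icc s T
  have hgcont : ContinuousOn g (Set.Icc s T) := by
    apply ContinuousOn.mul
    · have hβc : Continuous β := continuous_iff_continuousAt.2 fun x => (hβ x).continuousAt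
      exact (Real.continuous_exp.comp hβc).continuousOn
    · apply continuousOn_finset_sum
      intro i _
      intro x hx
      exact (((continuous_apply i).continuousAt.comp (hw x hx).continuousAt).abs).continuousWithinAt
  -- Dini derivative condition for Gronwall
  have hdini : ∀ x ∈ Set.Ico s T, ∀ r : ℝ, (0:ℝ) < r →
      ∀ᶠ z in 𝓝[>] x, (z - x)⁻¹ * (g z - g x) < r := by
    intro x hx r hr
    have hxIcc : x ∈ Set.Icc s T := Set.mem_Icc_of_Ico hx
    have hσbound : ∀ σ, ∀ᶠ z in 𝓝[>] x, gσ σ z < g x + (z - x) * r := by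
      intro σ
      rcases eq_or_lt_of_le (hgσ_le σ x) with heq | hlt
      · -- active sign vector: use the derivative bound
        have hact : ∑ i, sg σ i * w x i = F x := by
          have := heq
          simp only [hgσdef, hgdef] at this
          exact mul_left_cancel₀ (Real.exp_pos (β x)).ne' this
        set d := Real.exp (β x) * (α x * (∑ i, sg σ i * w x i) + ∑ i, sg σ i * (M x *ᵥ w x) i)
          with hd
        have hdle : d ≤ 0 := by
          rw [hd]
          apply mul_nonpos_of_nonneg_of_nonpos (Real.exp_pos _).le
          rw [hact]
          have := hkey x σ hact
          nlinarith [this]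
        have hder := hgσderiv σ x hxIcc
        have hslope : Tendsto (slope (gσ σ) x) (𝓝[≠] x) (𝓝 d) :=
          hasDerivAt_iff_tendsto_slope.1 hder
        have hev : ∀ᶠ z in 𝓝[≠] x, slope (gσ σ) x z < r :=
          hslope.eventually (Filter.Tendsto.eventually_lt_const (lt_of_le_of_lt hdle hr) tendsto_id)
        have hev' : ∀ᶠ z in 𝓝[>] x, slope (gσ σ) x z < r :=
          hev.filter_mono (nhdsWithin_mono x fun z hz => ne_of_gt hz)
        filter_upwards [hev', self_mem_nhdsWithin] with z hz hz'
        have hzx : 0 < z - x := sub_pos.2 hz'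
        have : (z - x)⁻¹ * (gσ σ z - gσ σ x) < r := by
          simpa [slope, vsub_eq_sub, smul_eq_mul] using hz
        rw [inv_mul_lt_iff₀ hzx] at this
        calc gσ σ z < gσ σ x + (z - x) * r := by linarith
          _ = g x + (z - x) * r := by rw [heq]
      · -- inactive sign vector: use continuity
        have hc : ContinuousAt (gσ σ) x := (hgσderiv σ x hxIcc).continuousAt
        have hev : ∀ᶠ z in 𝓝 x, gσ σ z < g x :=
          hc.eventually_lt continuousAt_const hlt
        filter_upwards [nhdsWithin_le_nhds hev, self_mem_nhdsWithin] with z hz hz'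
        have hzx : 0 < z - x := sub_pos.2 hz'
        nlinarith
    have hall : ∀ᶠ z in 𝓝[>] x, ∀ σ, gσ σ z < g x + (z - x) * r :=
      eventually_all.2 hσbound
    filter_upwards [hall, self_mem_nhdsWithin] with z hz hz'
    have hzx : 0 < z - x := sub_pos.2 hz'
    obtain ⟨σz, hσz⟩ := hattain z
    have : g z < g x + (z - x) * r := hσz ▸ hz σz
    rw [inv_mul_lt_iff₀ hzx]
    linarith
  -- apply Gronwall with K = 0, ε = 0
  have hgron : ∀ x ∈ Set.Icc s T, g x ≤ gronwallBound (g s) 0 0 (x - s) := by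
    apply le_gronwallBound_of_liminf_deriv_right_le (f' := fun _ => 0) hgcont
    · intro x hx r hr
      exact (hdini x hx r hr).frequently
    · exact le_refl _
    · intro x _
      simp
  intro t ht
  have hgt : g t ≤ g s := by
    have := hgron t ht
    rw [gronwallBound_K0] at this
    simpa using this
  have hβs : β s = 0 := intervalIntegral.integral_same
  have hgs : g s = F s := by simp [hgdef, hβs]
  have hgt' : Real.exp (β t) * F t ≤ F s := by rw [← hgs]; exact hgt
  have hEt : 0 < Real.exp (β t) := Real.exp_pos _
  have : F t ≤ Real.exp (-β t) * F s := by
    rw [Real.exp_neg]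
    rw [inv_mul_eq_div, le_div_iff₀ hEt]
    linarith [hgt']
  simpa [hFdef, hβdef] using this
end

section
/- Let M : ℝ → (n×n real matrices) be continuous with M_{ij}(t) ≥ 0 for all i ≠ j and all t (essential nonnegativity). If u : ℝ → ℝⁿ is differentiable with u′(t) = M(t) u(t) for all t ≥ s and u(s) ≥ 0 componentwise, then u(t) ≥ 0 componentwise for all t ≥ s. -/
open Filter Topology Finset Matrix

/-- If `M : ℝ → Matrix` is continuous and essentially nonnegative (all off-diagonal
entries nonnegative for every `t`), and `u` solves `u' = M(t) u` for `t ≥ s` with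
`u(s) ≥ 0` componentwise, then `u(t) ≥ 0` componentwise for all `t ≥ s`. -/
theorem stmt4 {n : ℕ} (M : ℝ → Matrix (Fin (n + 1)) (Fin (n + 1)) ℝ)
    (hM : Continuous M) (hoff : ∀ t, ∀ i j, i ≠ j → 0 ≤ M t i j)
    (s : ℝ) (u : ℝ → Fin (n + 1) → ℝ)
    (hu : ∀ t, s ≤ t → HasDerivAt u (M t *ᵥ u t) t)
    (hu0 : ∀ i, 0 ≤ u s i) :
    ∀ t, s ≤ t → ∀ i, 0 ≤ u t i := by
  intro t₀ ht₀ i₀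
  have hMe : ∀ i j, Continuous fun t => M t i j := fun i j =>
    (continuous_apply j).comp ((continuous_apply i).comp hM)
  have hg : Continuous fun t => ∑ i, ∑ j, |M t i j| := by
    apply continuous_finset_sum; intro i _
    apply continuous_finset_sum; intro j _
    exact (hMe i j).abs
  obtain ⟨x₀, hx₀, hC⟩ := isCompact_Icc.exists_isMaxOn (Set.nonempty_Icc.2 ht₀)
    hg.continuousOn
  set C := ∑ i, ∑ j, |M x₀ i j| with hCdef
  have hC0 : 0 ≤ C := Finset.sum_nonneg fun i _ => Finset.sum_nonneg fun j _ => abs_nonneg _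
  set K := C + 1 with hKdef
  have hK0 : 0 < K := by linarith
  have hrow : ∀ t ∈ Set.Icc s t₀, ∀ i, ∑ j, M t i j < K := by
    intro t ht i
    calc ∑ j, M t i j ≤ ∑ j, |M t i j| := Finset.sum_le_sum fun j _ => le_abs_self _
      _ ≤ ∑ i, ∑ j, |M t i j| := Finset.single_le_sum (f := fun i => ∑ j, |M t i j|)
          (fun i _ => Finset.sum_nonneg fun j _ => abs_nonneg _) (Finset.mem_univ i)
      _ ≤ C := hC ht
      _ < K := by linarith
  have huc : ∀ (i : Fin (n+1)) t, s ≤ t → ContinuousAt (fun t => u t i) t := fun i t ht =>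
    ((continuous_apply i).continuousAt).comp (hu t ht).continuousAt
  have key : ∀ ε > (0:ℝ), ∀ t ∈ Set.Icc s t₀, ∀ i, 0 < u t i + ε * Real.exp (K * (t - s)) := by
    intro ε hε
    set w : ℝ → Fin (n+1) → ℝ := fun t i => u t i + ε * Real.exp (K * (t - s)) with hwdef
    have hwc : ∀ (i : Fin (n+1)) t, s ≤ t → ContinuousAt (fun t => w t i) t := by
      intro i t ht
      exact (huc i t ht).add (continuousAt_const.mul
        (Real.continuous_exp.continuousAt.comp
          ((continuous_const.mul (continuous_id.sub continuous_const)).continuousAt)))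
    have hws : ∀ i, 0 < w s i := by
      intro i
      have h1 := hu0 i
      have h2 : 0 < ε * Real.exp (K * (s - s)) := by positivity
      simp only [hwdef]; linarith
    by_contra hcon
    push_neg at hcon
    obtain ⟨t₁, ht₁, i₁, hi₁⟩ := hcon
    set A : Set ℝ := ⋃ i, {t ∈ Set.Icc s t₀ | w t i ≤ 0} with hAdef
    have hAne : A.Nonempty := ⟨t₁, Set.mem_iUnion.2 ⟨i₁, ht₁, hi₁⟩⟩
    have hAbdd : BddBelow A := by
      refine ⟨s, fun t ht => ?_⟩
      obtain ⟨i, hti, _⟩ := Set.mem_iUnion.1 ht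
      exact hti.1
    have hAiclosed : ∀ i : Fin (n+1), IsClosed {t ∈ Set.Icc s t₀ | w t i ≤ 0} := by
      intro i
      refine isClosed_of_closure_subset fun x hx => ?_
      have hxI : x ∈ Set.Icc s t₀ :=
        isClosed_Icc.closure_subset (closure_mono (fun y hy => hy.1) hx)
      have hne : (𝓝[{t ∈ Set.Icc s t₀ | w t i ≤ 0}] x).NeBot :=
        mem_closure_iff_nhdsWithin_neBot.1 hx
      haveI := hne
      refine ⟨hxI, ?_⟩
      have hcw : ContinuousWithinAt (fun t => w t i) {t ∈ Set.Icc s t₀ | w t i ≤ 0} x :=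
        (hwc i x hxI.1).continuousWithinAt
      refine le_of_tendsto hcw ?_
      exact eventually_mem_nhdsWithin.mono fun t ht => ht.2
    have hAclosed : IsClosed A := isClosed_iUnion_of_finite hAiclosed
    set τ := sInf A with hτdef
    have hτA : τ ∈ A := hAclosed.csInf_mem hAne hAbdd
    obtain ⟨i, hτI, hτi⟩ := Set.mem_iUnion.1 hτA
    have hsτ : s < τ := by
      rcases lt_or_eq_of_le hτI.1 with h | h
      · exact h
      · exact absurd hτi (by rw [← h]; exact (hws i).not_ge)
    -- points in [s, τ) are strictly positive in all coordinates
    have hpos : ∀ t ∈ Set.Ico s τ, ∀ j, 0 < w t j := by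
      intro t ht j
      by_contra hle
      push_neg at hle
      have : t ∈ A := Set.mem_iUnion.2 ⟨j, ⟨ht.1, ht.2.le.trans hτI.2⟩, hle⟩
      exact absurd (csInf_le hAbdd this) (not_le.2 ht.2)
    -- nonnegativity at τ by continuity
    have hτnn : ∀ j, 0 ≤ w τ j := by
      intro j
      have hne : (𝓝[Set.Ico s τ] τ).NeBot := by
        rw [← mem_closure_iff_nhdsWithin_neBot, closure_Ico (ne_of_lt hsτ)]
        exact ⟨hsτ.le, le_rfl⟩
      haveI := hne
      have hcw : ContinuousWithinAt (fun t => w t j) (Set.Ico s τ) τ :=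
        (hwc j τ hτI.1).continuousWithinAt
      refine ge_of_tendsto hcw ?_
      exact eventually_mem_nhdsWithin.mono fun t ht => (hpos t ht j).le
    have hτi0 : w τ i = 0 := le_antisymm hτi (hτnn i)
    -- derivative of w_i at τ
    set E := Real.exp (K * (τ - s)) with hEdef
    have hE0 : 0 < E := Real.exp_pos _
    have hdw : HasDerivAt (fun t => w t i) ((M τ *ᵥ u τ) i + ε * (E * K)) τ := by
      have h1 : HasDerivAt (fun t => u t i) ((M τ *ᵥ u τ) i) τ :=
        hasDerivAt_pi.1 (hu τ hτI.1) i
      have h2 : HasDerivAt (fun t => K * (t - s)) K τ := by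
        simpa using ((hasDerivAt_id τ).sub_const s).const_mul K
      exact h1.add ((h2.exp).const_mul ε)
    -- the derivative is positive
    have hdpos : 0 < (M τ *ᵥ u τ) i + ε * (E * K) := by
      have hsum : (M τ *ᵥ u τ) i = ∑ j, M τ i j * w τ j - ε * E * ∑ j, M τ i j := by
        simp only [Matrix.mulVec, dotProduct, hwdef, hEdef]
        rw [Finset.mul_sum, ← Finset.sum_sub_distrib]
        exact Finset.sum_congr rfl fun j _ => by ring
      have h1 : 0 ≤ ∑ j, M τ i j * w τ j := by
        refine Finset.sum_nonneg fun j _ => ?_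
        rcases eq_or_ne i j with rfl | hij
        · rw [hτi0]; simp
        · exact mul_nonneg (hoff τ i j (Ne.symm hij).symm) (hτnn j)
      have h2 : ∑ j, M τ i j < K := hrow τ hτI i
      rw [hsum]
      have : ε * E * ∑ j, M τ i j < ε * E * K := by
        apply mul_lt_mul_of_pos_left h2 (by positivity)
      nlinarith
    -- but the left slope is nonpositive, contradiction
    have hslope : (M τ *ᵥ u τ) i + ε * (E * K) ≤ 0 := by
      have htend : Tendsto (slope (fun t => w t i) τ) (𝓝[<] τ)
          (𝓝 ((M τ *ᵥ u τ) i + ε * (E * K))) :=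
        ((hasDerivAt_iff_tendsto_slope.1 hdw).mono_left
          (nhdsWithin_mono _ fun x hx => ne_of_lt hx))
      refine le_of_tendsto htend ?_
      filter_upwards [Ioo_mem_nhdsLT_of_mem ⟨hsτ, le_rfl⟩] with t ht
      have h1 : 0 < w t i := hpos t ⟨ht.1.le, ht.2⟩ i
      have : slope (fun t => w t i) τ t = (w t i - w τ i) / (t - τ) := by
        simp [slope_def_field]
      rw [this, hτi0, sub_zero]
      exact div_nonpos_of_nonneg_of_nonpos h1.le (by linarith [ht.2])
    linarith
  -- let ε → 0
  by_contra hneg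
  push_neg at hneg
  set E := Real.exp (K * (t₀ - s)) with hEdef
  have hE0 : 0 < E := Real.exp_pos _
  have hε := key (-(u t₀ i₀) / (2 * E)) (div_pos (by linarith) (by positivity)) t₀ ⟨ht₀, le_rfl⟩ i₀
  rw [← hEdef] at hε
  have : -(u t₀ i₀) / (2 * E) * E = -(u t₀ i₀) / 2 := by field_simp
  rw [this] at hε
  linarith
end

section
/- Let M : ℝ → (n×n real matrices) be continuous with M_{ij}(t) ≥ 0 for all i ≠ j and all t, and let f : ℝ → ℝⁿ be continuous with f(t) ≥ 0 componentwise for all t. If r : ℝ → ℝⁿ is differentiable with r′(t) = M(t) r(t) + f(t) for all t ≥ s and r(s) ≥ 0 componentwise, then r(t) ≥ 0 componentwise for all t ≥ s. -/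
open Filter Topology Finset Matrix

/-- If `M : ℝ → Matrix` is continuous and essentially nonnegative (all off-diagonal
entries nonnegative for every `t`), `f : ℝ → ℝⁿ` is continuous and componentwise
nonnegative, and `r` solves the inhomogeneous system `r' = M(t) r + f(t)` for `t ≥ s`
with `r(s) ≥ 0` componentwise, then `r(t) ≥ 0` componentwise for all `t ≥ s`. -/
theorem stmt5 {n : ℕ} (M : ℝ → Matrix (Fin (n + 1)) (Fin (n + 1)) ℝ)
    (hM : Continuous M) (hoff : ∀ t, ∀ i j, i ≠ j → 0 ≤ M t i j)
    (f : ℝ → Fin (n + 1) → ℝ) (hf : Continuous f) (hf0 : ∀ t, ∀ i, 0 ≤ f t i)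
    (s : ℝ) (r : ℝ → Fin (n + 1) → ℝ)
    (hr : ∀ t, s ≤ t → HasDerivAt r (M t *ᵥ r t + f t) t)
    (hr0 : ∀ i, 0 ≤ r s i) :
    ∀ t, s ≤ t → ∀ i, 0 ≤ r t i := by
  intro T hT
  -- continuity facts
  have hrc : ∀ i, ∀ t, s ≤ t → ContinuousAt (fun u => r u i) t := by
    intro i t ht
    exact ((continuous_apply i).continuousAt).comp (hr t ht).continuousAt
  -- bound on row sums of M on [s,T]
  obtain ⟨C₀, hC₀⟩ : ∃ C₀ : ℝ, ∀ t ∈ Set.Icc s T, ∀ i, ∑ j, |M t i j| ≤ C₀ := by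
    have hcont : Continuous fun t => ∑ i, ∑ j, |M t i j| := by
      apply continuous_finset_sum; intro i _; apply continuous_finset_sum; intro j _
      exact ((continuous_apply j).comp ((continuous_apply i).comp hM)).abs
    obtain ⟨x, -, hx⟩ := isCompact_Icc.exists_isMaxOn (Set.nonempty_Icc.mpr hT)
      hcont.continuousOn
    refine ⟨∑ i, ∑ j, |M x i j|, fun t ht i => ?_⟩
    calc ∑ j, |M t i j| ≤ ∑ i, ∑ j, |M t i j| :=
          Finset.single_le_sum (f := fun i => ∑ j, |M t i j|)
            (fun i _ => Finset.sum_nonneg fun j _ => abs_nonneg _) (Finset.mem_univ i)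
      _ ≤ _ := hx ht
  set C : ℝ := C₀ + 1 with hC
  have hC₀nn : 0 ≤ C₀ := le_trans (Finset.sum_nonneg fun j _ => abs_nonneg _)
    (hC₀ s (Set.left_mem_Icc.mpr hT) 0)
  -- key perturbation claim
  have key : ∀ ε : ℝ, 0 < ε → ∀ t ∈ Set.Icc s T, ∀ i,
      0 < r t i + ε * Real.exp (C * (t - s)) := by
    intro ε hε
    by_contra hcon
    push_neg at hcon
    obtain ⟨t₀, ht₀, i₀, hi₀⟩ := hcon
    set g : ℝ → Fin (n + 1) → ℝ := fun t i => r t i + ε * Real.exp (C * (t - s)) with hg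
    have hgc : ∀ i, ∀ t, s ≤ t → ContinuousAt (fun u => g u i) t := by
      intro i t ht
      exact (hrc i t ht).add (by fun_prop)
    set S : Set ℝ := {t | t ∈ Set.Icc s T ∧ ∃ i, g t i ≤ 0} with hS
    have hSne : S.Nonempty := ⟨t₀, ht₀, i₀, hi₀⟩
    have hSbd : BddBelow S := ⟨s, fun t ht => ht.1.1⟩
    have hScl : IsClosed S := by
      have : S = ⋃ i, {t | t ∈ Set.Icc s T ∧ g t i ≤ 0} := by
        ext t; simp [hS, Set.mem_iUnion, exists_and_left]
      rw [this]
      refine isClosed_iUnion_of_finite fun i => ?_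
      refine IsSeqClosed.isClosed ?_
      intro u x hu hux
      have hxIcc : x ∈ Set.Icc s T :=
        isClosed_Icc.isSeqClosed (fun k => (hu k).1) hux
      refine ⟨hxIcc, ?_⟩
      have htend : Tendsto (fun k => g (u k) i) atTop (𝓝 (g x i)) :=
        ((hgc i x hxIcc.1).tendsto).comp hux
      exact le_of_tendsto htend (Eventually.of_forall fun k => (hu k).2)
    set τ : ℝ := sInf S with hτ
    have hτS : τ ∈ S := hScl.csInf_mem hSne hSbd
    have hτIcc : τ ∈ Set.Icc s T := hτS.1
    -- τ > s
    have hsτ : s < τ := by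
      have hpos : ∀ i, 0 < g s i := by
        intro i
        have : g s i = r s i + ε := by simp [hg]
        rw [this]; linarith [hr0 i]
      have hev : ∀ᶠ t in 𝓝 s, ∀ i, 0 < g t i := by
        rw [Filter.eventually_all]
        intro i
        exact (hgc i s le_rfl).eventually (eventually_gt_nhds (hpos i))
      obtain ⟨δ, hδ, hball⟩ := Metric.eventually_nhds_iff.mp hev
      rcases lt_or_ge s τ with h | h
      · exact h
      · exfalso
        have hτs : τ = s := le_antisymm h hτIcc.1
        obtain ⟨i, hi⟩ := hτS.2
        have := hball (show dist τ s < δ by simp [hτs, hδ]) i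
        linarith
    -- before τ, g is positive
    have hbefore : ∀ t, s ≤ t → t < τ → ∀ i, 0 < g t i := by
      intro t hst htτ i
      by_contra h
      push_neg at h
      have htS : t ∈ S := ⟨⟨hst, le_trans htτ.le hτIcc.2⟩, i, h⟩
      exact absurd (csInf_le hSbd htS) (not_le.mpr htτ)
    -- at τ, all components nonneg
    have hτnn : ∀ j, 0 ≤ g τ j := by
      intro j
      have h1 : Tendsto (fun u => g u j) (𝓝[<] τ) (𝓝 (g τ j)) :=
        ((hgc j τ hτIcc.1).tendsto).mono_left nhdsWithin_le_nhds
      refine ge_of_tendsto h1 ?_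
      filter_upwards [Ioo_mem_nhdsLT_of_mem (Set.mem_Ioc.mpr ⟨hsτ, le_rfl⟩)] with u hu
      exact (hbefore u hu.1.le hu.2 j).le
    obtain ⟨i, hi⟩ := hτS.2
    have hgτi : g τ i = 0 := le_antisymm hi (hτnn i)
    set E : ℝ := Real.exp (C * (τ - s)) with hE
    have hEpos : 0 < E := Real.exp_pos _
    have hrτi : r τ i = -(ε * E) := by
      have : r τ i + ε * E = 0 := hgτi
      linarith
    have hrτj : ∀ j, r τ i ≤ r τ j := by
      intro j
      have := hτnn j
      simp only [hg] at this
      have h2 : r τ i = -(ε * Real.exp (C * (τ - s))) := hrτi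
      linarith
    -- derivative of g · i at τ
    have hder_r : HasDerivAt (fun u => r u i) ((M τ *ᵥ r τ + f τ) i) τ :=
      hasDerivAt_pi.mp (hr τ hτIcc.1) i
    have hder_e : HasDerivAt (fun u => ε * Real.exp (C * (u - s)))
        (ε * (Real.exp (C * (τ - s)) * C)) τ := by
      have h1 : HasDerivAt (fun u : ℝ => C * (u - s)) C τ := by
        simpa using (((hasDerivAt_id τ).sub_const s).const_mul C)
      exact ((Real.hasDerivAt_exp _).comp τ h1).const_mul ε
    have hder : HasDerivAt (fun u => g u i)
        ((M τ *ᵥ r τ + f τ) i + ε * (E * C)) τ := hder_r.add hder_e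
    -- the derivative is positive
    have hMrow : ∑ j, M τ i j ≤ C₀ :=
      le_trans (Finset.sum_le_sum fun j _ => le_abs_self _) (hC₀ τ hτIcc i)
    have hMv : -(C₀ * (ε * E)) ≤ (M τ *ᵥ r τ) i := by
      have h1 : (∑ j, M τ i j) * r τ i ≤ ∑ j, M τ i j * r τ j := by
        rw [Finset.sum_mul]
        refine Finset.sum_le_sum fun j _ => ?_
        rcases eq_or_ne j i with h | h
        · rw [h]
        · exact mul_le_mul_of_nonneg_left (hrτj j) (hoff τ i j (Ne.symm h))
      have h2 : C₀ * r τ i ≤ (∑ j, M τ i j) * r τ i := by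
        apply mul_le_mul_of_nonpos_right hMrow
        rw [hrτi]; nlinarith [mul_pos hε hEpos]
      have h3 : (M τ *ᵥ r τ) i = ∑ j, M τ i j * r τ j := by
        simp [Matrix.mulVec, dotProduct]
      rw [h3]
      calc -(C₀ * (ε * E)) = C₀ * r τ i := by rw [hrτi]; ring
        _ ≤ (∑ j, M τ i j) * r τ i := h2
        _ ≤ _ := h1
    have hdpos : 0 < (M τ *ᵥ r τ + f τ) i + ε * (E * C) := by
      have hfnn := hf0 τ i
      have : (M τ *ᵥ r τ + f τ) i = (M τ *ᵥ r τ) i + f τ i := rfl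
      rw [this, hC]
      nlinarith [mul_pos hε hEpos]
    -- contradiction via slope
    have hslope := hasDerivAt_iff_tendsto_slope.mp hder
    have hev : ∀ᶠ u in 𝓝[≠] τ, 0 < slope (fun u => g u i) τ u :=
      hslope.eventually (eventually_gt_nhds hdpos)
    have hev2 : ∀ᶠ u in 𝓝[<] τ, 0 < slope (fun u => g u i) τ u :=
      hev.filter_mono (nhdsWithin_mono τ fun x hx => ne_of_lt hx)
    have hIoo : Set.Ioo s τ ∈ 𝓝[<] τ :=
      Ioo_mem_nhdsLT_of_mem (Set.mem_Ioc.mpr ⟨hsτ, le_rfl⟩)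
    obtain ⟨u, hu1, hu2⟩ := (hev2.and (eventually_mem_nhdsWithin.and
      (eventually_of_mem hIoo fun x hx => hx))).exists
    obtain ⟨hu_mem, hu_Ioo⟩ := hu2
    have huτ : u < τ := hu_Ioo.2
    have hgupos : 0 < g u i := hbefore u hu_Ioo.1.le huτ i
    rw [slope_def_field, hgτi, sub_zero] at hu1
    have : g u i / (u - τ) < 0 := div_neg_of_pos_of_neg hgupos (by linarith)
    linarith
  -- conclude
  intro i
  by_contra h
  push_neg at h
  have hε : 0 < -r T i / Real.exp (C * (T - s)) := by
    apply div_pos (by linarith) (Real.exp_pos _)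
  have := key _ hε T (Set.right_mem_Icc.mpr hT) i
  rw [div_mul_cancel₀] at this
  · linarith
  · exact (Real.exp_pos _).ne'
end

section
/- Let a > 0 and K ≥ 0. Let M : ℝ → (n×n real matrices) be continuous with M_{ij}(t) ≥ 0 for all i ≠ j and Σ_{1≤i≤n} M_{ij}(t) ≤ −a for every column j and every t ≥ 0, and let f : ℝ → ℝⁿ be continuous with ‖f(t)‖₁ ≤ K for all t ≥ 0. If r : ℝ → ℝⁿ is differentiable with r′(t) = M(t) r(t) + f(t) for all t ≥ 0, then ‖r(t)‖₁ ≤ e^{−a t} ‖r(0)‖₁ + K/a for all t ≥ 0; in particular limsup_{t→∞} ‖r(t)‖₁ ≤ K/a. -/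
open Filter Topology Finset Matrix

/-- Let `a > 0`, `K ≥ 0`. If `M : ℝ → Matrix` is continuous, essentially nonnegative
with all column sums at most `−a` for `t ≥ 0`, `f` is continuous with `‖f(t)‖₁ ≤ K`
for `t ≥ 0`, and `r' = M(t) r + f(t)` for `t ≥ 0`, then
`‖r(t)‖₁ ≤ e^{−a t} ‖r(0)‖₁ + K/a` for all `t ≥ 0`; in particular
`limsup_{t→∞} ‖r(t)‖₁ ≤ K/a`. -/
theorem stmt6 {n : ℕ} (a K : ℝ) (ha : 0 < a) (hK : 0 ≤ K)
    (M : ℝ → Matrix (Fin (n + 1)) (Fin (n + 1)) ℝ) (hM : Continuous M)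
    (hoff : ∀ t, 0 ≤ t → ∀ i j, i ≠ j → 0 ≤ M t i j)
    (hcol : ∀ t, 0 ≤ t → ∀ j, ∑ i, M t i j ≤ -a)
    (f : ℝ → Fin (n + 1) → ℝ) (hf : Continuous f)
    (hfK : ∀ t, 0 ≤ t → ∑ i, |f t i| ≤ K)
    (r : ℝ → Fin (n + 1) → ℝ)
    (hr : ∀ t, 0 ≤ t → HasDerivAt r (M t *ᵥ r t + f t) t) :
    (∀ t, 0 ≤ t → ∑ i, |r t i| ≤ Real.exp (-a * t) * (∑ i, |r 0 i|) + K / a) ∧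
      Filter.limsup (fun t => ∑ i, |r t i|) Filter.atTop ≤ K / a := by
  set V : ℝ → ℝ := fun t => ∑ i, |r t i| with hVdef
  -- key differential inequality (right Dini derivative)
  have key : ∀ t, 0 ≤ t → ∃ d : ℝ,
      Tendsto (fun z => (z - t)⁻¹ * (V z - V t)) (𝓝[>] t) (𝓝 d) ∧ d ≤ -a * V t + K := by
    intro t ht
    set g : Fin (n + 1) → ℝ := M t *ᵥ r t + f t with hg
    have hcomp : ∀ i, HasDerivAt (fun z => r z i) (g i) t := hasDerivAt_pi.1 (hr t ht)
    set σ : Fin (n + 1) → ℝ := fun i =>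
      if r t i = 0 then (if g i < 0 then -1 else 1) else (if r t i < 0 then -1 else 1) with hσ
    have hσ1 : ∀ i, σ i = 1 ∨ σ i = -1 := by
      intro i; simp only [hσ]; split_ifs <;> simp
    have hσabs : ∀ i, |σ i| = 1 := by
      intro i; rcases hσ1 i with h | h <;> rw [h] <;> norm_num
    have hσr : ∀ i, σ i * r t i = |r t i| := by
      intro i
      simp only [hσ]
      rcases eq_or_ne (r t i) 0 with h0 | h0
      · simp [h0]
      · rw [if_neg h0]
        rcases lt_or_gt_of_ne h0 with h | h
        · rw [if_pos h, abs_of_neg h]; ring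
        · rw [if_neg (not_lt.mpr h.le), abs_of_pos h]; ring
    refine ⟨∑ i, σ i * g i, ?_, ?_⟩
    · -- slope tends to ∑ σ i * g i
      have hti : ∀ i : Fin (n + 1), Tendsto (fun z => (z - t)⁻¹ * (|r z i| - |r t i|))
          (𝓝[>] t) (𝓝 (σ i * g i)) := by
        intro i
        have hsub : 𝓝[>] t ≤ 𝓝[≠] t :=
          nhdsWithin_mono _ (fun z hz => ne_of_gt hz)
        rcases eq_or_ne (r t i) 0 with h0 | h0
        · -- zero case: slope of |r · i| tends to |g i| = σ i * g i
          have hs : Tendsto (fun z => (r z i - r t i) / (z - t)) (𝓝[>] t) (𝓝 (g i)) := by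
            have := (hasDerivAt_iff_tendsto_slope.1 (hcomp i)).mono_left hsub
            refine this.congr fun z => ?_
            rw [slope_def_field]
          have habs : Tendsto (fun z => |(r z i - r t i) / (z - t)|) (𝓝[>] t) (𝓝 |g i|) :=
            hs.abs
          have hgσ : σ i * g i = |g i| := by
            simp only [hσ, if_pos h0]
            rcases lt_or_ge (g i) 0 with h | h
            · rw [if_pos h, abs_of_neg h]; ring
            · rw [if_neg (not_lt.mpr h), abs_of_nonneg h]; ring
          rw [hgσ]
          refine habs.congr' ?_
          filter_upwards [self_mem_nhdsWithin] with z hz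
          have hzt : (0:ℝ) < z - t := sub_pos.mpr hz
          rw [h0, abs_div, abs_of_pos hzt, sub_zero, abs_zero, sub_zero,
            div_eq_inv_mul]
        · -- nonzero case: |r · i| is differentiable at t
          have hd : HasDerivAt (fun z => |r z i|) ((SignType.sign (r t i) : ℝ) * g i) t :=
            by have := (hasDerivAt_abs h0).comp t (hcomp i); exact this
          have hsgn : (SignType.sign (r t i) : ℝ) = σ i := by
            simp only [hσ, if_neg h0]
            rcases lt_or_gt_of_ne h0 with h | h
            · simp [sign_neg h, h]
            · simp [sign_pos h, not_lt.mpr h.le]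
          rw [hsgn] at hd
          have := (hasDerivAt_iff_tendsto_slope.1 hd).mono_left hsub
          refine this.congr fun z => ?_
          rw [slope_def_field, div_eq_inv_mul]
      have := tendsto_finset_sum Finset.univ (fun i _ => hti i)
      refine this.congr fun z => ?_
      simp only [hVdef]
      rw [← Finset.sum_sub_distrib, Finset.mul_sum]
    · -- the bound ∑ σ i * g i ≤ -a * V t + K
      have hB : ∑ i, σ i * f t i ≤ K := by
        refine le_trans (Finset.sum_le_sum fun i _ => ?_) (hfK t ht)
        calc σ i * f t i ≤ |σ i * f t i| := le_abs_self _
          _ = |f t i| := by rw [abs_mul, hσabs, one_mul]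
      have hA : ∑ i, σ i * (M t *ᵥ r t) i ≤ -a * V t := by
        have swap : ∑ i, σ i * (M t *ᵥ r t) i = ∑ j, ∑ i, σ i * M t i j * r t j := by
          rw [Finset.sum_comm]
          refine Finset.sum_congr rfl fun i _ => ?_
          rw [mulVec, dotProduct, Finset.mul_sum]
          exact Finset.sum_congr rfl fun j _ => by ring
        rw [swap]
        have hj : ∀ j : Fin (n + 1), ∑ i, σ i * M t i j * r t j ≤ -a * |r t j| := by
          intro j
          have hrj : r t j = σ j * |r t j| := by
            rcases hσ1 j with h | h
            · rw [h, one_mul, ← hσr j, h, one_mul]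
            · rw [h, ← hσr j, h]; ring
          have step : ∀ i : Fin (n + 1), σ i * M t i j * r t j ≤ M t i j * |r t j| := by
            intro i
            rcases eq_or_ne i j with rfl | hij
            · have : σ i * M t i i * r t i = M t i i * |r t i| := by
                rw [mul_comm (σ i) (M t i i), mul_assoc, hσr i]
              exact this.le
            · have hM0 := hoff t ht i j hij
              have h1 : σ i * r t j ≤ |r t j| := by
                calc σ i * r t j ≤ |σ i * r t j| := le_abs_self _
                  _ = |r t j| := by rw [abs_mul, hσabs, one_mul]
              calc σ i * M t i j * r t j = M t i j * (σ i * r t j) := by ring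
                _ ≤ M t i j * |r t j| := mul_le_mul_of_nonneg_left h1 hM0
          calc ∑ i, σ i * M t i j * r t j ≤ ∑ i, M t i j * |r t j| :=
                Finset.sum_le_sum fun i _ => step i
            _ = (∑ i, M t i j) * |r t j| := by rw [Finset.sum_mul]
            _ ≤ -a * |r t j| := by
                have := hcol t ht j
                nlinarith [abs_nonneg (r t j)]
        calc ∑ j, ∑ i, σ i * M t i j * r t j ≤ ∑ j, -a * |r t j| :=
              Finset.sum_le_sum fun j _ => hj j
          _ = -a * V t := by rw [hVdef, Finset.mul_sum]
      calc ∑ i, σ i * g i = ∑ i, σ i * (M t *ᵥ r t) i + ∑ i, σ i * f t i := by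
            rw [← Finset.sum_add_distrib]
            refine Finset.sum_congr rfl fun i _ => ?_
            simp only [hg, Pi.add_apply]; ring
        _ ≤ -a * V t + K := add_le_add hA hB
  -- main pointwise bound via Grönwall
  have main : ∀ t, 0 ≤ t → V t ≤ Real.exp (-a * t) * V 0 + K / a := by
    intro b hb
    have hcont : ContinuousOn V (Set.Icc 0 b) := by
      intro x hx
      have : ContinuousAt V x := by
        have hrc : ContinuousAt r x := (hr x hx.1).continuousAt
        exact tendsto_finset_sum _ fun i _ =>
          (continuous_abs.continuousAt.comp ((continuous_apply i).continuousAt.comp hrc))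
      exact this.continuousWithinAt
    have hslope : ∀ x ∈ Set.Ico (0:ℝ) b, ∀ ρ, (fun y => -a * V y + K) x < ρ →
        ∃ᶠ z in 𝓝[>] x, (z - x)⁻¹ * (V z - V x) < ρ := by
      intro x hx ρ hρ
      obtain ⟨d, hd, hdle⟩ := key x hx.1
      have hev : ∀ᶠ z in 𝓝[>] x, (z - x)⁻¹ * (V z - V x) < ρ :=
        hd.eventually_lt_const (lt_of_le_of_lt hdle hρ)
      exact hev.frequently
    have hbound : ∀ x ∈ Set.Ico (0:ℝ) b, (fun y => -a * V y + K) x ≤ -a * V x + K :=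
      fun x _ => le_rfl
    have H := le_gronwallBound_of_liminf_deriv_right_le hcont hslope le_rfl hbound b
      ⟨hb, le_rfl⟩
    rw [sub_zero, gronwallBound_of_K_ne_0 (by linarith : (-a) ≠ 0)] at H
    have H' : V b ≤ V 0 * Real.exp (-a * b) + K / -a * (Real.exp (-a * b) - 1) := H
    refine H'.trans ?_
    have he : (0:ℝ) < Real.exp (-a * b) := Real.exp_pos _
    have hKa : 0 ≤ K / a := div_nonneg hK ha.le
    have h1 : Real.exp (-a * b) ≤ 1 := Real.exp_le_one_iff.mpr (by nlinarith)
    have : K / -a * (Real.exp (-a * b) - 1) = K / a * (1 - Real.exp (-a * b)) := by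
      rw [div_neg]; ring
    rw [this]
    nlinarith
  constructor
  · exact main
  · -- limsup part
    set g : ℝ → ℝ := fun t => Real.exp (-a * t) * V 0 + K / a with hgdef
    have hgt : Tendsto g atTop (𝓝 (K / a)) := by
      have h1 : Tendsto (fun t : ℝ => a * t) atTop atTop :=
        Tendsto.const_mul_atTop ha tendsto_id
      have h2 : Tendsto (fun t : ℝ => Real.exp (-a * t)) atTop (𝓝 0) := by
        have := Real.tendsto_exp_neg_atTop_nhds_zero.comp h1
        refine this.congr fun t => ?_
        simp [neg_mul]
      have h3 : Tendsto g atTop (𝓝 (0 * V 0 + K / a)) :=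
        (h2.mul tendsto_const_nhds).add tendsto_const_nhds
      simpa using h3
    have hle : ∀ᶠ t in atTop, V t ≤ g t := by
      filter_upwards [eventually_ge_atTop (0:ℝ)] with t ht
      exact main t ht
    have hVnn : ∀ᶠ t in atTop, (0:ℝ) ≤ V t :=
      Eventually.of_forall fun t => Finset.sum_nonneg fun i _ => abs_nonneg _
    have hcb : IsCoboundedUnder (· ≤ ·) atTop V :=
      isCoboundedUnder_le_of_eventually_le atTop hVnn
    have hbd : IsBoundedUnder (· ≤ ·) atTop g := hgt.isBoundedUnder_le
    calc limsup V atTop ≤ limsup g atTop := limsup_le_limsup hle hcb hbd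
      _ = K / a := hgt.limsup_eq
end
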